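/- Let {f_k : X_k → X}_{k=1}^N be a local IFS on a set X. Then the union A* of all local attractors of the local IFS is itself a local attractor (A* = ⋃_{k=1}^N f_k(A* ∩ X_k)), and it is the largest local attractor: every local attractor A satisfies A ⊆ A*. -/

import Mathlib

theorem aux_post_fixed {X : Type*} (F : Set X → Set X)
    (hmono : Monotone F) :
    F (⋃₀ {A : Set X | A ⊆ F A}) = ⋃₀ {A : Set X | A ⊆ F A} := by
  set P := ⋃₀ {A : Set X | A ⊆ F A} with hP
  have hPF : P ⊆ F P := by
    intro x hx
    rcases hx with ⟨A, hA, hxA⟩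
    exact hmono (Set.subset_sUnion_of_mem hA) (hA hxA)
  have hFP : F P ⊆ P := Set.subset_sUnion_of_mem (hmono hPF)
  exact Set.Subset.antisymm hFP hPF

/-- For a local IFS `{f_k : X_k → X}_{k=1}^N` on a set `X`, the union `A*` of
all local attractors is itself a local attractor, and it is the largest one: every local
attractor is contained in `A*`. -/
theorem largest_local_attractor {X : Type*} {N : ℕ}
    (Xk : Fin N → Set X) (f : Fin N → X → X) :
    (⋃₀ {A : Set X | A = ⋃ k, f k '' (A ∩ Xk k)})
        = (⋃ k, f k '' ((⋃₀ {A : Set X | A = ⋃ k, f k '' (A ∩ Xk k)}) ∩ Xk k)) ∧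
      ∀ A : Set X, A = (⋃ k, f k '' (A ∩ Xk k)) →
        A ⊆ ⋃₀ {A : Set X | A = ⋃ k, f k '' (A ∩ Xk k)} := by
  set F : Set X → Set X := fun A => ⋃ k, f k '' (A ∩ Xk k) with hF
  have hmono : Monotone F := by
    intro A B hAB
    exact Set.iUnion_mono fun k =>
      Set.image_mono (Set.inter_subset_inter_left _ hAB)
  -- the union of post-fixed points
  set P := ⋃₀ {A : Set X | A ⊆ F A} with hPdef
  have hPfix : F P = P := aux_post_fixed F hmono
  -- the union of fixed points equals P
  have hEq : (⋃₀ {A : Set X | A = F A}) = P := by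
    apply Set.Subset.antisymm
    · apply Set.sUnion_subset
      intro A hA
      exact Set.subset_sUnion_of_mem (le_of_eq hA)
    · exact Set.subset_sUnion_of_mem (hPfix.symm : P = F P)
  constructor
  · show (⋃₀ {A : Set X | A = F A}) = F (⋃₀ {A : Set X | A = F A})
    rw [hEq, hPfix]
  · intro A hA
    show A ⊆ ⋃₀ {A : Set X | A = F A}
    exact Set.subset_sUnion_of_mem hA
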